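/- arXiv:1610.09757 — 5 statements merged into one kernel-verified Lean document; each statement's English description precedes it below -/
import Mathlib

section
/- Let n ≥ 0 be an integer, ε∞, ε₀ ∈ {1, −1}, K₀, K₁, K₂, K₃ ∈ ℂ with −ε∞(K₂ + K₃²/4) − 2ε₀√(−K₀) = 2(n+1). Set α = 1/2 + ε₀√(−K₀) and ω(x) = ε∞(x − K₃/2) + α/x. If P is a polynomial solving x P''(x) + (1 + 2ε₀√(−K₀) − ε∞K₃ x + 2ε∞ x²) P'(x) + (−2ε∞ n x + K₁ − ε∞ α K₃) P(x) = 0, then y(x) := P(x) · x^α · exp(ε∞(x² − K₃x)/2) satisfies y'' = (x² − K₃x − K₂ − K₁/x − (1/4 + K₀)/x²) y on any simply connected domain in ℂ \ {0}. -/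
open Complex
open Polynomial

/-- if P solves the polynomial (biconfluent-Heun–type) equation, then
y = P(x)·x^α·exp(ε∞(x²−K₃x)/2) solves the normal form y'' = r y, where x^α is
realized as exp(α·lg x) for a branch lg of the logarithm on a simply connected
domain U ⊆ ℂ \ {0}. -/
theorem stmt4 (K0 K1 K2 K3 einf e0 s0 : ℂ) (n : ℕ)
    (heinf : einf = 1 ∨ einf = -1) (he0 : e0 = 1 ∨ e0 = -1)
    (hs0 : s0 ^ 2 = -K0)
    (hquant : -einf * (K2 + K3 ^ 2 / 4) - 2 * e0 * s0 = 2 * ((n : ℂ) + 1))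
    (U : Set ℂ) (hU : IsOpen U) (h0 : (0:ℂ) ∉ U) (hsc : SimplyConnectedSpace U)
    (lg : ℂ → ℂ) (hlg : ∀ x ∈ U, HasDerivAt lg (1/x) x)
    (P : Polynomial ℂ)
    (hP : ∀ x : ℂ, x * (Polynomial.derivative (Polynomial.derivative P)).eval x
      + (1 + 2 * e0 * s0 - einf * K3 * x + 2 * einf * x ^ 2)
        * (Polynomial.derivative P).eval x
      + (-2 * einf * (n : ℂ) * x + K1 - einf * (1/2 + e0 * s0) * K3) * P.eval x = 0) :
    ∀ x ∈ U,
      deriv (deriv (fun t => P.eval t * Complex.exp ((1/2 + e0 * s0) * lg t)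
        * Complex.exp (einf * (t ^ 2 - K3 * t) / 2))) x
      = (x ^ 2 - K3 * x - K2 - K1 / x - (1/4 + K0) / x ^ 2)
        * (P.eval x * Complex.exp ((1/2 + e0 * s0) * lg x)
          * Complex.exp (einf * (x ^ 2 - K3 * x) / 2)) := by
  -- abbreviations
  have hEd : ∀ t ∈ U, HasDerivAt
      (fun s => Complex.exp ((1/2 + e0 * s0) * lg s) * Complex.exp (einf * (s ^ 2 - K3 * s) / 2))
      (((1/2 + e0 * s0) * t⁻¹ + einf * (t - K3/2)) *
        (Complex.exp ((1/2 + e0 * s0) * lg t) * Complex.exp (einf * (t ^ 2 - K3 * t) / 2))) t := by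
    intro t ht
    have htne : t ≠ 0 := fun h => h0 (h ▸ ht)
    have h1 : HasDerivAt (fun s => Complex.exp ((1/2 + e0 * s0) * lg s))
        (Complex.exp ((1/2 + e0 * s0) * lg t) * ((1/2 + e0 * s0) * (1/t))) t :=
      ((hlg t ht).const_mul _).cexp
    have hp : HasDerivAt (fun s : ℂ => einf * (s ^ 2 - K3 * s) / 2)
        (einf * (2 * t - K3) / 2) t := by
      have hq : HasDerivAt (fun s : ℂ => s ^ 2 - K3 * s) (2 * t - K3) t := by
        simpa using (hasDerivAt_pow 2 t).fun_sub ((hasDerivAt_id t).const_mul K3)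
      simpa [mul_div_assoc] using (hq.const_mul einf).div_const 2
    have h2 := hp.cexp
    have := h1.fun_mul h2
    refine this.congr_deriv ?_
    field_simp
  intro x hx
  have hxne : x ≠ 0 := fun h => h0 (h ▸ hx)
  -- first derivative
  have hFd : ∀ t ∈ U, HasDerivAt
      (fun s => P.eval s * Complex.exp ((1/2 + e0 * s0) * lg s)
        * Complex.exp (einf * (s ^ 2 - K3 * s) / 2))
      (((derivative P).eval t + ((1/2 + e0 * s0) * t⁻¹ + einf * (t - K3/2)) * P.eval t) *
        (Complex.exp ((1/2 + e0 * s0) * lg t) * Complex.exp (einf * (t ^ 2 - K3 * t) / 2))) t := by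
    intro t ht
    have heq : (fun s => P.eval s * Complex.exp ((1/2 + e0 * s0) * lg s)
        * Complex.exp (einf * (s ^ 2 - K3 * s) / 2))
        = fun s => P.eval s * (Complex.exp ((1/2 + e0 * s0) * lg s)
          * Complex.exp (einf * (s ^ 2 - K3 * s) / 2)) := funext fun s => mul_assoc _ _ _
    rw [heq]
    have h' := (P.hasDerivAt t).fun_mul (hEd t ht)
    refine h'.congr_deriv ?_
    ring
  -- deriv of F agrees with g on U
  have hgx : deriv (deriv (fun t => P.eval t * Complex.exp ((1/2 + e0 * s0) * lg t)
        * Complex.exp (einf * (t ^ 2 - K3 * t) / 2))) x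
      = deriv (fun t => ((derivative P).eval t + ((1/2 + e0 * s0) * t⁻¹ + einf * (t - K3/2)) * P.eval t) *
          (Complex.exp ((1/2 + e0 * s0) * lg t) * Complex.exp (einf * (t ^ 2 - K3 * t) / 2))) x := by
    apply Filter.EventuallyEq.deriv_eq
    filter_upwards [hU.mem_nhds hx] with t ht
    exact (hFd t ht).deriv
  rw [hgx]
  -- derivative of g
  have hω : HasDerivAt (fun t : ℂ => (1/2 + e0 * s0) * t⁻¹ + einf * (t - K3/2))
      ((1/2 + e0 * s0) * (-(x ^ 2)⁻¹) + einf * 1) x :=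
    (((hasDerivAt_inv hxne).const_mul _).add (((hasDerivAt_id x).sub_const (K3/2)).const_mul einf))
  have hQ : HasDerivAt (fun t : ℂ => (derivative P).eval t +
        ((1/2 + e0 * s0) * t⁻¹ + einf * (t - K3/2)) * P.eval t)
      ((derivative (derivative P)).eval x +
        (((1/2 + e0 * s0) * (-(x ^ 2)⁻¹) + einf * 1) * P.eval x +
          ((1/2 + e0 * s0) * x⁻¹ + einf * (x - K3/2)) * (derivative P).eval x)) x :=
    ((derivative P).hasDerivAt x).add (hω.mul (P.hasDerivAt x))
  have hg := (hQ.fun_mul (hEd x hx)).deriv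
  rw [hg]
  -- key algebraic identity
  have e2 : einf ^ 2 = 1 := by rcases heinf with h | h <;> rw [h] <;> norm_num
  have f2 : e0 ^ 2 = 1 := by rcases he0 with h | h <;> rw [h] <;> norm_num
  have key : (derivative (derivative P)).eval x
      + (((1/2 + e0 * s0) * (-(x ^ 2)⁻¹) + einf) +
        ((1/2 + e0 * s0) * x⁻¹ + einf * (x - K3/2)) ^ 2) * P.eval x
      + 2 * ((1/2 + e0 * s0) * x⁻¹ + einf * (x - K3/2)) * (derivative P).eval x
      = (x ^ 2 - K3 * x - K2 - K1 / x - (1/4 + K0) / x ^ 2) * P.eval x := by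
    have h := hP x
    have hinv : x * x⁻¹ = 1 := mul_inv_cancel₀ hxne
    linear_combination x⁻¹ * h + (-einf * P.eval x) * hquant
      + (x⁻¹^2 * P.eval x) * hs0
      + (((x - K3/2)^2 - (K2 + K3^2/4)) * P.eval x) * e2
      + (s0^2 * x⁻¹^2 * P.eval x) * f2
      + (-(derivative (derivative P)).eval x - (2*einf*x - einf*K3) * (derivative P).eval x
          + (2*einf*(n:ℂ) + 2*einf*(1/2+e0*s0)) * P.eval x) * hinv
  linear_combination (Complex.exp ((1/2 + e0 * s0) * lg x) *
    Complex.exp (einf * (x ^ 2 - K3 * x) / 2)) * key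
end

section
/- Let a = ε∞/2, b = −ε∞K₃/2, d = ε₀√(−K₀) with ε∞, ε₀ ∈ {1,−1} and K₄ = −1. Then 4a² + K₄ = 0 and d² + K₀ = 0; moreover if F satisfies F''(ζ) + (4aζ + 2b)F'(ζ) + ((K₃ + 4ab)ζ + K₂ + 4a(1+d) + b²)F(ζ) = 0, then K₃ + 4ab = 0 and under the substitution w = −ε∞(ζ − K₃/2)², u(w) = F(ζ), the function u satisfies the confluent hypergeometric (Kummer) equation w u''(w) + (1/2 − w) u'(w) − (ε∞K₃²/16 + ε₀√(−K₀)/2 + ε∞K₂/4 + 1/2) u(w) = 0. -/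
open Complex

/-- separation-of-variables computation: with a = ε∞/2,
b = −ε∞K₃/2, d = ε₀√(−K₀), K₄ = −1, we have 4a²+K₄ = 0, d²+K₀ = 0, K₃+4ab = 0,
and under w = −ε∞(ζ−K₃/2)², u(w) = F(ζ), the kernel ODE becomes Kummer's
confluent hypergeometric equation. -/
theorem stmt11 (K0 K2 K3 einf e0 s0 a b d K4 : ℂ)
    (heinf : einf = 1 ∨ einf = -1) (he0 : e0 = 1 ∨ e0 = -1)
    (hs0 : s0 ^ 2 = -K0)
    (ha : a = einf / 2) (hb : b = -einf * K3 / 2) (hd : d = e0 * s0)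
    (hK4 : K4 = -1)
    (F u : ℂ → ℂ)
    (hFd : Differentiable ℂ F) (hFd2 : Differentiable ℂ (deriv F))
    (hud : Differentiable ℂ u) (hud2 : Differentiable ℂ (deriv u))
    (hFode : ∀ ζ, deriv (deriv F) ζ + (4 * a * ζ + 2 * b) * deriv F ζ
      + ((K3 + 4 * a * b) * ζ + K2 + 4 * a * (1 + d) + b ^ 2) * F ζ = 0)
    (hsub : ∀ ζ, u (-einf * (ζ - K3/2) ^ 2) = F ζ) :
    4 * a ^ 2 + K4 = 0 ∧ d ^ 2 + K0 = 0 ∧ K3 + 4 * a * b = 0 ∧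
    ∀ ζ : ℂ,
      (-einf * (ζ - K3/2) ^ 2) * deriv (deriv u) (-einf * (ζ - K3/2) ^ 2)
        + (1/2 - (-einf * (ζ - K3/2) ^ 2)) * deriv u (-einf * (ζ - K3/2) ^ 2)
        - (einf * K3 ^ 2 / 16 + e0 * s0 / 2 + einf * K2 / 4 + 1/2)
          * u (-einf * (ζ - K3/2) ^ 2) = 0 := by
  subst ha hb hd hK4
  have he2 : einf ^ 2 = 1 := by rcases heinf with h | h <;> simp [h]
  have he02 : e0 ^ 2 = 1 := by rcases he0 with h | h <;> simp [h]
  refine ⟨by linear_combination he2, by linear_combination s0 ^ 2 * he02 + hs0,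
    by linear_combination (-K3) * he2, ?_⟩
  -- chain rule setup
  have hgd : ∀ z : ℂ, HasDerivAt (fun t : ℂ => -einf * (t - K3 / 2) ^ 2)
      (-2 * einf * (z - K3 / 2)) z := by
    intro z
    have h1 : HasDerivAt (fun t : ℂ => (t - K3 / 2) ^ 2) (2 * (z - K3 / 2)) z := by
      simpa using ((hasDerivAt_id z).sub_const (K3 / 2)).fun_pow 2
    have h2 := h1.const_mul (-einf)
    exact h2.congr_deriv (by ring)
  have hF' : ∀ z : ℂ, deriv F z =
      deriv u (-einf * (z - K3 / 2) ^ 2) * (-2 * einf * (z - K3 / 2)) := by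
    intro z
    have hu1 : HasDerivAt u (deriv u (-einf * (z - K3 / 2) ^ 2))
        (-einf * (z - K3 / 2) ^ 2) := (hud _).hasDerivAt
    have hc := hu1.comp z (hgd z)
    have hFeq : HasDerivAt F
        (deriv u (-einf * (z - K3 / 2) ^ 2) * (-2 * einf * (z - K3 / 2))) z := by
      refine hc.congr_of_eventuallyEq (Filter.Eventually.of_forall fun t => ?_)
      exact (hsub t).symm
    exact hFeq.deriv
  intro ζ
  have hF'' : deriv (deriv F) ζ =
      (deriv (deriv u) (-einf * (ζ - K3 / 2) ^ 2) * (-2 * einf * (ζ - K3 / 2)))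
        * (-2 * einf * (ζ - K3 / 2))
      + deriv u (-einf * (ζ - K3 / 2) ^ 2) * (-2 * einf) := by
    have hu2 : HasDerivAt (deriv u) (deriv (deriv u) (-einf * (ζ - K3 / 2) ^ 2))
        (-einf * (ζ - K3 / 2) ^ 2) := (hud2 _).hasDerivAt
    have hc2 := hu2.comp ζ (hgd ζ)
    have hlin : HasDerivAt (fun t : ℂ => -2 * einf * (t - K3 / 2)) (-2 * einf) ζ := by
      simpa using ((hasDerivAt_id ζ).sub_const (K3 / 2)).const_mul (-2 * einf)
    have hprod := hc2.mul hlin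
    have hDeq : HasDerivAt (deriv F)
        ((deriv (deriv u) (-einf * (ζ - K3 / 2) ^ 2) * (-2 * einf * (ζ - K3 / 2)))
          * (-2 * einf * (ζ - K3 / 2))
        + deriv u (-einf * (ζ - K3 / 2) ^ 2) * (-2 * einf)) ζ := by
      refine HasDerivAt.congr_of_eventuallyEq ?_ (Filter.Eventually.of_forall fun t => hF' t)
      exact hprod
    exact hDeq.deriv
  have E := hFode ζ
  rw [hF'', hF' ζ, ← hsub ζ] at E
  rcases heinf with h | h
  · subst h
    linear_combination (-(1 : ℂ) / 4) * E
  · subst h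
    linear_combination ((1 : ℂ) / 4) * E
end

section
/- Let φ(z) = exp(a e^{2z} + b e^z + d z) with a, b, d ∈ ℂ, let F be twice differentiable, and set K(z,s) = φ(z)φ(s)F(e^z + e^s). Write L_z = e^{−z}(∂²/∂z² + ℓ(z)) with ℓ(z) = K₄e^{4z} + K₃e^{3z} + K₂e^{2z} + K₁e^z + K₀. If 4a² + K₄ = 0, d² + K₀ = 0, and F satisfies F''(ζ) + (4aζ + 2b)F'(ζ) + ((K₃ + 4ab)ζ + K₂ + 4a(1+d) + b²)F(ζ) = 0, then L_z K(z,s) − L_s K(z,s) = 0 identically. -/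
open Complex

private lemma phi_deriv (a b d : ℂ) (φ : ℂ → ℂ)
    (hφ : ∀ z, φ z = Complex.exp (a * Complex.exp (2*z) + b * Complex.exp z + d * z)) (z : ℂ) :
    HasDerivAt φ (φ z * (2*a*Complex.exp (2*z) + b*Complex.exp z + d)) z := by
  have h2 : HasDerivAt (fun z : ℂ => a * Complex.exp (2*z) + b * Complex.exp z + d * z)
      (2*a*Complex.exp (2*z) + b*Complex.exp z + d) z := by
    have e1 : HasDerivAt (fun z : ℂ => a * Complex.exp (2*z)) (a * (Complex.exp (2*z) * (2*1))) z :=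
      (((hasDerivAt_id z).const_mul 2).cexp).const_mul a
    have e2 : HasDerivAt (fun z : ℂ => b * Complex.exp z) (b * Complex.exp z) z :=
      (Complex.hasDerivAt_exp z).const_mul b
    have e3 : HasDerivAt (fun z : ℂ => d * z) (d * 1) z := (hasDerivAt_id z).const_mul d
    have := (e1.add e2).add e3
    exact this.congr_deriv (by ring)
  have hfun : φ = fun z => Complex.exp (a * Complex.exp (2*z) + b * Complex.exp z + d * z) :=
    funext hφ
  rw [hfun]
  have := h2.cexp
  simpa using this

private lemma second_deriv (a b d : ℂ) (φ F : ℂ → ℂ)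
    (hφ : ∀ z, φ z = Complex.exp (a * Complex.exp (2*z) + b * Complex.exp z + d * z))
    (hFd : Differentiable ℂ F) (hFd2 : Differentiable ℂ (deriv F)) (C c z : ℂ) :
    deriv (fun z' => deriv (fun z'' => φ z'' * C * F (Complex.exp z'' + c)) z') z
    = φ z * C * ((2*a*Complex.exp (2*z)+b*Complex.exp z+d)^2 * F (Complex.exp z + c)
      + (4*a*Complex.exp (2*z)+b*Complex.exp z) * F (Complex.exp z + c)
      + (2*(2*a*Complex.exp (2*z)+b*Complex.exp z+d)+1) * Complex.exp z * deriv F (Complex.exp z + c)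
      + Complex.exp z ^ 2 * deriv (deriv F) (Complex.exp z + c)) := by
  have hexp : ∀ w : ℂ, HasDerivAt (fun z : ℂ => Complex.exp z + c) (Complex.exp w) w :=
    fun w => (Complex.hasDerivAt_exp w).add_const c
  have hFe : ∀ w : ℂ, HasDerivAt (fun z : ℂ => F (Complex.exp z + c))
      (deriv F (Complex.exp w + c) * Complex.exp w) w :=
    fun w => ((hFd (Complex.exp w + c)).hasDerivAt).comp w (hexp w)
  have hFe2 : ∀ w : ℂ, HasDerivAt (fun z : ℂ => deriv F (Complex.exp z + c))
      (deriv (deriv F) (Complex.exp w + c) * Complex.exp w) w :=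
    fun w => by have := ((hFd2 (Complex.exp w + c)).hasDerivAt).comp w (hexp w); exact this
  have hD1 : ∀ w : ℂ, HasDerivAt (fun z'' => φ z'' * C * F (Complex.exp z'' + c))
      (φ w * C * ((2*a*Complex.exp (2*w)+b*Complex.exp w+d) * F (Complex.exp w + c)
        + Complex.exp w * deriv F (Complex.exp w + c))) w := by
    intro w
    have := ((phi_deriv a b d φ hφ w).mul_const C).mul (hFe w)
    exact this.congr_deriv (by ring)
  have hrw : (fun z' => deriv (fun z'' => φ z'' * C * F (Complex.exp z'' + c)) z')
      = fun w => φ w * C * ((2*a*Complex.exp (2*w)+b*Complex.exp w+d) * F (Complex.exp w + c)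
        + Complex.exp w * deriv F (Complex.exp w + c)) := funext fun w => (hD1 w).deriv
  rw [hrw]
  have hP : HasDerivAt (fun w : ℂ => 2*a*Complex.exp (2*w)+b*Complex.exp w+d)
      (4*a*Complex.exp (2*z)+b*Complex.exp z) z := by
    have e1 : HasDerivAt (fun w : ℂ => 2*a*Complex.exp (2*w)) ((2*a) * (Complex.exp (2*z) * (2*1))) z :=
      (((hasDerivAt_id z).const_mul 2).cexp).const_mul (2*a)
    have e2 : HasDerivAt (fun w : ℂ => b * Complex.exp w) (b * Complex.exp z) z :=
      (Complex.hasDerivAt_exp z).const_mul b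
    have := (e1.add e2).add_const d
    exact this.congr_deriv (by ring)
  have hG : HasDerivAt (fun w => (2*a*Complex.exp (2*w)+b*Complex.exp w+d) * F (Complex.exp w + c)
        + Complex.exp w * deriv F (Complex.exp w + c))
      ((4*a*Complex.exp (2*z)+b*Complex.exp z) * F (Complex.exp z + c)
        + (2*a*Complex.exp (2*z)+b*Complex.exp z+d) * (deriv F (Complex.exp z + c) * Complex.exp z)
        + (Complex.exp z * deriv F (Complex.exp z + c)
          + Complex.exp z * (deriv (deriv F) (Complex.exp z + c) * Complex.exp z))) z := by
    exact (hP.mul (hFe z)).add ((Complex.hasDerivAt_exp z).mul (hFe2 z))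
  have htot := ((phi_deriv a b d φ hφ z).mul_const C).mul hG
  refine htot.deriv.trans ?_
  ring

/-- the symmetric kernel K(z,s) = φ(z)φ(s)F(e^z+e^s) is annihilated
by the difference L_z − L_s of the two Hill operators. -/
theorem stmt12 (K0 K1 K2 K3 K4 a b d : ℂ)
    (φ F : ℂ → ℂ) (Kk : ℂ → ℂ → ℂ) (ℓf : ℂ → ℂ)
    (hφ : ∀ z, φ z = Complex.exp (a * Complex.exp (2*z) + b * Complex.exp z + d * z))
    (hℓ : ∀ z, ℓf z = K4 * Complex.exp (4*z) + K3 * Complex.exp (3*z)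
      + K2 * Complex.exp (2*z) + K1 * Complex.exp z + K0)
    (hK : ∀ z s, Kk z s = φ z * φ s * F (Complex.exp z + Complex.exp s))
    (hFd : Differentiable ℂ F) (hFd2 : Differentiable ℂ (deriv F))
    (ha : 4 * a ^ 2 + K4 = 0) (hd : d ^ 2 + K0 = 0)
    (hFode : ∀ ζ, deriv (deriv F) ζ + (4 * a * ζ + 2 * b) * deriv F ζ
      + ((K3 + 4 * a * b) * ζ + K2 + 4 * a * (1 + d) + b ^ 2) * F ζ = 0) :
    ∀ z s : ℂ,
      Complex.exp (-z) * (deriv (fun z' => deriv (fun z'' => Kk z'' s) z') z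
          + ℓf z * Kk z s)
      - Complex.exp (-s) * (deriv (fun s' => deriv (fun s'' => Kk z s'') s') s
          + ℓf s * Kk z s) = 0 := by
  intro z s
  have hz : (fun z'' => Kk z'' s) = fun z'' => φ z'' * φ s * F (Complex.exp z'' + Complex.exp s) :=
    funext fun w => hK w s
  have hs : (fun s'' => Kk z s'') = fun s'' => φ s'' * φ z * F (Complex.exp s'' + Complex.exp z) := by
    funext w
    rw [hK, add_comm (Complex.exp z) (Complex.exp w)]
    ring
  simp only [hz, hs]
  rw [second_deriv a b d φ F hφ hFd hFd2 (φ s) (Complex.exp s) z,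
      second_deriv a b d φ F hφ hFd hFd2 (φ z) (Complex.exp z) s,
      hℓ z, hℓ s, add_comm (Complex.exp s) (Complex.exp z)]
  have hode := hFode (Complex.exp z + Complex.exp s)
  have h2 : ∀ w : ℂ, Complex.exp (2*w) = Complex.exp w ^ 2 := by
    intro w; rw [show (2:ℂ)*w = w + w by ring, Complex.exp_add]; ring
  have h3 : ∀ w : ℂ, Complex.exp (3*w) = Complex.exp w ^ 3 := by
    intro w; rw [show (3:ℂ)*w = w + (w + w) by ring, Complex.exp_add, Complex.exp_add]; ring
  have h4 : ∀ w : ℂ, Complex.exp (4*w) = Complex.exp w ^ 4 := by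
    intro w; rw [show (4:ℂ)*w = w + (w + (w + w)) by ring, Complex.exp_add, Complex.exp_add, Complex.exp_add]; ring
  rw [h2, h2, h3, h3, h4, h4, Complex.exp_neg, Complex.exp_neg]
  field_simp
  linear_combination (Complex.exp z * Complex.exp s * (Complex.exp z - Complex.exp s) * (φ z * φ s)) * hode
    + (φ z * φ s * Complex.exp z * Complex.exp s * (Complex.exp z^3 - Complex.exp s^3) * F (Complex.exp z + Complex.exp s)) * ha
    + (φ z * φ s * (Complex.exp s - Complex.exp z) * F (Complex.exp z + Complex.exp s)) * hd
end

section
/- Suppose f : ℝ → ℝ satisfies f'' + (A + B cos 2x) f = 0 with B ≠ 0, and suppose f(x) = P(e^{ix}) exp(c₁ e^{ix} + c₂ e^{−ix} + dx) for a polynomial P and constants c₁, c₂, d. Then substituting this ansatz forces c₁² = c₂² = 0 while the coefficient of the highest frequency term requires c₁² + B/2 = 0 (or c₂² + B/2 = 0), a contradiction; hence the Mathieu equation with B ≠ 0 admits no solution of this exponential-polynomial form. -/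
open Complex Polynomial

noncomputable def Uf (x : ℝ) : ℂ := Complex.exp (Complex.I * x)
noncomputable def Vf (x : ℝ) : ℂ := Complex.exp (-(Complex.I * x))
noncomputable def Wf (c1 c2 d : ℂ) (x : ℝ) : ℂ :=
  Complex.exp (c1 * Uf x + c2 * Vf x + d * x)

lemma hasDerivAt_Uf (x : ℝ) : HasDerivAt Uf (I * Uf x) x := by
  have h0 : HasDerivAt (fun y : ℝ => I * (y : ℂ)) I x := by
    simpa using (Complex.ofRealCLM.hasDerivAt (x := x)).const_mul I
  have h := h0.cexp
  rw [mul_comm]; exact h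

lemma hasDerivAt_Vf (x : ℝ) : HasDerivAt Vf (-(I * Vf x)) x := by
  have h0 : HasDerivAt (fun y : ℝ => -(I * (y : ℂ))) (-I) x := by
    have h := ((Complex.ofRealCLM.hasDerivAt (x := x)).const_mul I).neg
    simp at h; exact h
  have := h0.cexp
  simpa [Vf] using by ring_nf at this ⊢; exact this

lemma hasDerivAt_Wf (c1 c2 d : ℂ) (x : ℝ) :
    HasDerivAt (Wf c1 c2 d) ((c1 * (I * Uf x) - c2 * (I * Vf x) + d) * Wf c1 c2 d x) x := by
  have hx : HasDerivAt (fun y : ℝ => d * (y : ℂ)) d x := by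
    simpa using (Complex.ofRealCLM.hasDerivAt (x := x)).const_mul d
  have h := (((hasDerivAt_Uf x).const_mul c1).add ((hasDerivAt_Vf x).const_mul c2)).add hx
  have h2 := h.cexp
  have : HasDerivAt (Wf c1 c2 d)
      (Complex.exp (c1 * Uf x + c2 * Vf x + d * x) * (c1 * (I * Uf x) + c2 * -(I * Vf x) + d)) x := h2
  convert this using 1
  simp [Wf]; ring

lemma hasDerivAt_PUf (P : Polynomial ℂ) (x : ℝ) :
    HasDerivAt (fun y => P.eval (Uf y)) (I * Uf x * P.derivative.eval (Uf x)) x := by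
  have := HasDerivAt.scomp (𝕜 := ℝ) (𝕜' := ℂ) (F := ℂ)
    (h := Uf) (g₁ := fun z => P.eval z) (x := x) (P.hasDerivAt (Uf x)) (hasDerivAt_Uf x)
  simp [Function.comp, smul_eq_mul, mul_comm, mul_assoc] at this; rw [mul_assoc]; exact this

lemma Uf_mul_Vf (x : ℝ) : Uf x * Vf x = 1 := by
  rw [Uf, Vf, ← Complex.exp_add]; simp

lemma Uf_ne_zero (x : ℝ) : Uf x ≠ 0 := Complex.exp_ne_zero _
lemma Wf_ne_zero (c1 c2 d : ℂ) (x : ℝ) : Wf c1 c2 d x ≠ 0 := Complex.exp_ne_zero _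

noncomputable def Gf (P : Polynomial ℂ) (c1 c2 d : ℂ) (x : ℝ) : ℂ :=
  I * Uf x * P.derivative.eval (Uf x)
    + (c1 * (I * Uf x) - c2 * (I * Vf x) + d) * P.eval (Uf x)

noncomputable def G2f (P : Polynomial ℂ) (c1 c2 d : ℂ) (x : ℝ) : ℂ :=
  I * ((I * Uf x) * P.derivative.eval (Uf x)
        + Uf x * (I * Uf x * P.derivative.derivative.eval (Uf x)))
  + ((c1 * (I * (I * Uf x)) - c2 * (I * -(I * Vf x))) * P.eval (Uf x)
      + (c1 * (I * Uf x) - c2 * (I * Vf x) + d) * (I * Uf x * P.derivative.eval (Uf x)))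

lemma hasDerivAt_f1 (P : Polynomial ℂ) (c1 c2 d : ℂ) (x : ℝ) :
    HasDerivAt (fun y => P.eval (Uf y) * Wf c1 c2 d y)
      (Gf P c1 c2 d x * Wf c1 c2 d x) x := by
  have := (hasDerivAt_PUf P x).mul (hasDerivAt_Wf c1 c2 d x)
  refine this.congr_deriv ?_
  simp only [Gf]; ring

lemma hasDerivAt_Gf (P : Polynomial ℂ) (c1 c2 d : ℂ) (x : ℝ) :
    HasDerivAt (Gf P c1 c2 d) (G2f P c1 c2 d x) x := by
  have h1 := ((hasDerivAt_Uf x).mul (hasDerivAt_PUf P.derivative x)).const_mul I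
  have hinner : HasDerivAt (fun y => c1 * (I * Uf y) - c2 * (I * Vf y) + d)
      (c1 * (I * (I * Uf x)) - c2 * (I * -(I * Vf x))) x := by
    have hu := ((hasDerivAt_Uf x).const_mul I).const_mul c1
    have hv := ((hasDerivAt_Vf x).const_mul I).const_mul c2
    exact (hu.sub hv).add_const d
  have h2 := hinner.mul (hasDerivAt_PUf P x)
  have h := h1.add h2
  have hfun : (Gf P c1 c2 d) = fun y =>
      I * (Uf y * P.derivative.eval (Uf y))
        + (c1 * (I * Uf y) - c2 * (I * Vf y) + d) * P.eval (Uf y) := by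
    funext y; simp only [Gf]; ring
  rw [hfun]
  exact h

lemma cos_two_eq (x : ℝ) : Complex.cos (2 * x) = (Uf x ^ 2 + Vf x ^ 2) / 2 := by
  rw [Complex.cos, Uf, Vf, sq, sq, ← Complex.exp_add, ← Complex.exp_add,
    show (2:ℂ) * x * I = I * x + I * x by ring,
    show -(2 * (x:ℂ)) * I = -(I * x) + -(I * x) by ring]

lemma key_identity (A B : ℂ) (P : Polynomial ℂ) (c1 c2 d : ℂ) (f : ℝ → ℂ)
    (hf : ∀ x : ℝ, f x = P.eval (Complex.exp (Complex.I * x))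
      * Complex.exp (c1 * Complex.exp (Complex.I * x)
        + c2 * Complex.exp (-(Complex.I * x)) + d * x))
    (hode : ∀ x : ℝ, deriv (deriv f) x
      + (A + B * Complex.cos (2 * x)) * f x = 0) (x : ℝ) :
    G2f P c1 c2 d x + Gf P c1 c2 d x * (c1 * (I * Uf x) - c2 * (I * Vf x) + d)
      + (A + B * ((Uf x ^ 2 + Vf x ^ 2) / 2)) * P.eval (Uf x) = 0 := by
  have hfeq : f = fun y => P.eval (Uf y) * Wf c1 c2 d y := by
    funext y; rw [hf y]; rfl
  have hderiv1 : deriv f = fun y => Gf P c1 c2 d y * Wf c1 c2 d y := by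
    funext y
    rw [hfeq]
    exact (hasDerivAt_f1 P c1 c2 d y).deriv
  have hd2 : deriv (deriv f) x
      = G2f P c1 c2 d x * Wf c1 c2 d x
        + Gf P c1 c2 d x * ((c1 * (I * Uf x) - c2 * (I * Vf x) + d) * Wf c1 c2 d x) := by
    rw [hderiv1]
    exact ((hasDerivAt_Gf P c1 c2 d x).mul (hasDerivAt_Wf c1 c2 d x)).deriv
  have h := hode x
  simp only [hd2] at h
  simp only [hfeq, cos_two_eq] at h
  have hW := Wf_ne_zero c1 c2 d x
  have h' : (G2f P c1 c2 d x + Gf P c1 c2 d x * (c1 * (I * Uf x) - c2 * (I * Vf x) + d)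
      + (A + B * ((Uf x ^ 2 + Vf x ^ 2) / 2)) * P.eval (Uf x)) * Wf c1 c2 d x = 0 := by
    linear_combination h
  exact (mul_eq_zero.mp h').resolve_right hW

noncomputable def Qp (A B c1 c2 d : ℂ) (P : Polynomial ℂ) : Polynomial ℂ :=
  C (-1) * Polynomial.derivative P * X^3
  + C (-1) * Polynomial.derivative (Polynomial.derivative P) * X^4
  + C (-(2*c1)) * Polynomial.derivative P * X^4
  + C (2*c2) * Polynomial.derivative P * X^2
  + C (2*I*d) * Polynomial.derivative P * X^3
  + C (B/2 - c1^2) * P * X^4 + C ((2*I*d - 1)*c1) * P * X^3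
  + C (2*c1*c2 + d^2 + A) * P * X^2 + C (-((1 + 2*I*d)*c2)) * P * X^1
  + C (B/2 - c2^2) * P * X^0

lemma Qp_eval_zero (A B c1 c2 d : ℂ) (P : Polynomial ℂ) (x : ℝ)
    (hL : G2f P c1 c2 d x + Gf P c1 c2 d x * (c1 * (I * Uf x) - c2 * (I * Vf x) + d)
      + (A + B * ((Uf x ^ 2 + Vf x ^ 2) / 2)) * P.eval (Uf x) = 0) :
    (Qp A B c1 c2 d P).eval (Uf x) = 0 := by
  have hV : Vf x = (Uf x)⁻¹ := eq_inv_of_mul_eq_one_left (by rw [mul_comm]; exact Uf_mul_Vf x)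
  rw [hV] at hL
  have hU := Uf_ne_zero x
  have key : (Qp A B c1 c2 d P).eval (Uf x)
      = Uf x ^ 2 * (G2f P c1 c2 d x + Gf P c1 c2 d x * (c1 * (I * Uf x) - c2 * (I * (Uf x)⁻¹) + d)
      + (A + B * ((Uf x ^ 2 + ((Uf x)⁻¹) ^ 2) / 2)) * P.eval (Uf x)) := by
    simp only [Qp, G2f, Gf, hV, Polynomial.eval_add, Polynomial.eval_mul, Polynomial.eval_pow,
      Polynomial.eval_C, Polynomial.eval_X]
    have hI := Complex.I_sq
    field_simp
    ring_nf
    rw [Complex.I_sq]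
    ring
  rw [key, hL, mul_zero]

lemma Uf_injOn : Set.InjOn Uf (Set.Ioo (0:ℝ) 1) := by
  intro a ha b hb hab
  rw [Uf, Uf, Complex.exp_eq_exp_iff_exists_int] at hab
  obtain ⟨k, hk⟩ := hab
  have hc : (a : ℂ) = b + k * (2 * Real.pi) := by
    linear_combination (-I) * hk + ((a:ℂ) - b - k * (2*Real.pi)) * Complex.I_sq
  have hre : a = b + k * (2 * Real.pi) := by exact_mod_cast hc
  have hpi := Real.pi_gt_three
  have hk0 : k = 0 := by
    rcases lt_trichotomy k 0 with h | h | h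
    · have : (k : ℝ) ≤ -1 := by exact_mod_cast (by omega : k ≤ (-1:ℤ))
      nlinarith [ha.1, ha.2, hb.1, hb.2]
    · exact h
    · have : (1 : ℝ) ≤ k := by exact_mod_cast h
      nlinarith [ha.1, ha.2, hb.1, hb.2]
  rw [hk0] at hre; push_cast at hre; linarith

lemma Qp_zero (Q : Polynomial ℂ) (h : ∀ x : ℝ, Q.eval (Uf x) = 0) : Q = 0 := by
  apply Polynomial.eq_zero_of_infinite_isRoot
  exact ((Set.Ioo_infinite (by norm_num : (0:ℝ) < 1)).image Uf_injOn).mono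
    (by rintro z ⟨x, -, rfl⟩; exact h x)

lemma Qp_coeff_top (A B c1 c2 d : ℂ) (P : Polynomial ℂ) :
    (Qp A B c1 c2 d P).coeff (P.natDegree + 4) = (B/2 - c1^2) * P.coeff P.natDegree := by
  set n := P.natDegree with hn
  have htop : ∀ k, n < k → P.coeff k = 0 := fun k hk =>
    Polynomial.coeff_eq_zero_of_natDegree_lt hk
  simp only [Qp, Polynomial.coeff_add, Polynomial.coeff_mul_X_pow', Polynomial.coeff_C_mul,
    Polynomial.coeff_derivative, pow_zero, mul_one]
  rw [show n+4-3 = n+1 by omega, show n+4-4 = n by omega, show n+4-2 = n+2 by omega,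
    show n+4-1 = n+3 by omega, show n+1+1 = n+2 by omega, show n+2+1 = n+3 by omega]
  simp only [htop (n+1) (by omega), htop (n+2) (by omega), htop (n+3) (by omega),
    htop (n+4) (by omega), show 3 ≤ n+4 by omega, show 4 ≤ n+4 by omega,
    show 2 ≤ n+4 by omega, show 1 ≤ n+4 by omega, if_true, zero_mul, mul_zero,
    add_zero, zero_add]

lemma Qp_coeff_top3 (A B c1 c2 d : ℂ) (P : Polynomial ℂ) (hc1 : c1^2 = B/2) :
    (Qp A B c1 c2 d P).coeff (P.natDegree + 3)
      = c1 * P.coeff P.natDegree * (2*I*d - 1 - 2*P.natDegree) := by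
  set n := P.natDegree with hn
  have htop : ∀ k, n < k → P.coeff k = 0 := fun k hk =>
    Polynomial.coeff_eq_zero_of_natDegree_lt hk
  simp only [Qp, Polynomial.coeff_add, Polynomial.coeff_mul_X_pow', Polynomial.coeff_C_mul,
    Polynomial.coeff_derivative, pow_zero, mul_one]
  rcases Nat.eq_zero_or_pos n with h0 | hpos
  · rw [h0]
    norm_num
    simp only [htop 1 (by omega), htop 2 (by omega), htop 3 (by omega), zero_mul, mul_zero,
      add_zero, zero_add]
    ring
  · rw [show n+3-3 = n by omega, show n+3-4 = n-1 by omega, show n+3-2 = n+1 by omega,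
      show n+3-1 = n+2 by omega, show n-1+1 = n by omega, show n+1+1 = n+2 by omega]
    simp only [htop (n+1) (by omega), htop (n+2) (by omega), htop (n+3) (by omega),
      show 3 ≤ n+3 by omega, show 4 ≤ n+3 by omega,
      show 2 ≤ n+3 by omega, show 1 ≤ n+3 by omega, if_true, zero_mul, mul_zero,
      add_zero, zero_add, hc1]
    rw [Nat.cast_sub (by omega : 1 ≤ n)]
    push_cast
    ring

lemma Qp_coeff_bot (A B c1 c2 d : ℂ) (P : Polynomial ℂ) (m : ℕ)
    (bot : ∀ k, k < m → P.coeff k = 0) :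
    (Qp A B c1 c2 d P).coeff m = (B/2 - c2^2) * P.coeff m := by
  simp only [Qp, Polynomial.coeff_add, Polynomial.coeff_mul_X_pow', Polynomial.coeff_C_mul,
    Polynomial.coeff_derivative, pow_zero, mul_one]
  rcases Nat.lt_or_ge m 4 with h | h
  · interval_cases m <;>
      norm_num [bot 0, bot 1, bot 2]
  · rw [show m-4+1+1 = m-2 by omega, show m-3+1 = m-2 by omega, show m-4+1 = m-3 by omega,
      show m-2+1 = m-1 by omega]
    simp only [bot (m-1) (by omega), bot (m-2) (by omega), bot (m-3) (by omega),
      bot (m-4) (by omega), show 3 ≤ m by omega, show 4 ≤ m by omega,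
      show 2 ≤ m by omega, show 1 ≤ m by omega, if_true, zero_mul, mul_zero,
      add_zero, zero_add]

lemma Qp_coeff_bot1 (A B c1 c2 d : ℂ) (P : Polynomial ℂ) (m : ℕ)
    (bot : ∀ k, k < m → P.coeff k = 0) (hc2 : c2^2 = B/2) :
    (Qp A B c1 c2 d P).coeff (m+1) = c2 * P.coeff m * (2*m - 1 - 2*I*d) := by
  simp only [Qp, Polynomial.coeff_add, Polynomial.coeff_mul_X_pow', Polynomial.coeff_C_mul,
    Polynomial.coeff_derivative, pow_zero, mul_one]
  rcases Nat.lt_or_ge m 3 with h | h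
  · interval_cases m <;>
      norm_num [hc2, bot 0, bot 1] <;>
      ring_nf
  · rw [show m+1-3+1 = m-1 by omega, show m+1-4+1+1 = m-1 by omega,
      show m+1-4+1 = m-2 by omega, show m+1-2+1 = m by omega,
      show m+1-4 = m-3 by omega, show m+1-3 = m-2 by omega, show m+1-2 = m-1 by omega,
      show m+1-1 = m by omega]
    simp only [bot (m-1) (by omega), bot (m-2) (by omega), bot (m-3) (by omega),
      hc2, show 3 ≤ m+1 by omega, show 4 ≤ m+1 by omega,
      show 2 ≤ m+1 by omega, show 1 ≤ m+1 by omega, if_true, zero_mul, mul_zero,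
      add_zero, zero_add, sub_self]
    rw [Nat.cast_sub (by omega : 1 ≤ m)]
    push_cast
    ring


/-- the Mathieu equation f'' + (A + B cos 2x) f = 0 with B ≠ 0
admits no solution of the exponential-polynomial (Bank–Laine/Kovacic Case 1)
form f(x) = P(e^{ix}) exp(c₁e^{ix} + c₂e^{−ix} + dx). -/
theorem stmt16 (A B : ℂ) (hB : B ≠ 0) (P : Polynomial ℂ) (hP : P ≠ 0)
    (c1 c2 d : ℂ) (f : ℝ → ℂ)
    (hf : ∀ x : ℝ, f x = P.eval (Complex.exp (Complex.I * x))
      * Complex.exp (c1 * Complex.exp (Complex.I * x)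
        + c2 * Complex.exp (-(Complex.I * x)) + d * x))
    (hode : ∀ x : ℝ, deriv (deriv f) x
      + (A + B * Complex.cos (2 * x)) * f x = 0) :
    False := by
  have hkey := key_identity A B P c1 c2 d f hf hode
  have hQ : Qp A B c1 c2 d P = 0 :=
    Qp_zero _ (fun x => Qp_eval_zero A B c1 c2 d P x (hkey x))
  have ha : P.coeff P.natDegree ≠ 0 := by
    have := Polynomial.leadingCoeff_ne_zero.mpr hP
    rwa [Polynomial.leadingCoeff] at this
  have hb : P.coeff P.natTrailingDegree ≠ 0 := by
    have := (not_congr Polynomial.trailingCoeff_eq_zero).mpr hP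
    rwa [Polynomial.trailingCoeff] at this
  have bot : ∀ k, k < P.natTrailingDegree → P.coeff k = 0 := fun k hk =>
    Polynomial.coeff_eq_zero_of_lt_natTrailingDegree hk
  -- top coefficient: c1^2 = B/2
  have h4 : (B/2 - c1^2) * P.coeff P.natDegree = 0 := by
    rw [← Qp_coeff_top A B c1 c2 d P, hQ, Polynomial.coeff_zero]
  have hc1 : c1^2 = B/2 := by
    have := (mul_eq_zero.mp h4).resolve_right ha
    linear_combination -this
  have hc1ne : c1 ≠ 0 := by
    intro h
    rw [h] at hc1
    have : B = 0 := by linear_combination -2 * hc1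
    exact hB this
  -- next coefficient: 2 I d = 1 + 2 n
  have h3 : c1 * P.coeff P.natDegree * (2*I*d - 1 - 2*P.natDegree) = 0 := by
    rw [← Qp_coeff_top3 A B c1 c2 d P hc1, hQ, Polynomial.coeff_zero]
  have hd1 : 2*I*d = 1 + 2*(P.natDegree : ℂ) := by
    rcases mul_eq_zero.mp h3 with h | h
    · rcases mul_eq_zero.mp h with h' | h'
      · exact absurd h' hc1ne
      · exact absurd h' ha
    · linear_combination h
  -- bottom coefficient: c2^2 = B/2
  have hm : (B/2 - c2^2) * P.coeff P.natTrailingDegree = 0 := by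
    rw [← Qp_coeff_bot A B c1 c2 d P P.natTrailingDegree bot, hQ, Polynomial.coeff_zero]
  have hc2 : c2^2 = B/2 := by
    have := (mul_eq_zero.mp hm).resolve_right hb
    linear_combination -this
  have hc2ne : c2 ≠ 0 := by
    intro h
    rw [h] at hc2
    have : B = 0 := by linear_combination -2 * hc2
    exact hB this
  -- next-to-bottom coefficient: 2 I d = 2 m - 1
  have hm1 : c2 * P.coeff P.natTrailingDegree
      * (2*P.natTrailingDegree - 1 - 2*I*d) = 0 := by
    rw [← Qp_coeff_bot1 A B c1 c2 d P P.natTrailingDegree bot hc2, hQ, Polynomial.coeff_zero]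
  have hd2 : 2*I*d = 2*(P.natTrailingDegree : ℂ) - 1 := by
    rcases mul_eq_zero.mp hm1 with h | h
    · rcases mul_eq_zero.mp h with h' | h'
      · exact absurd h' hc2ne
      · exact absurd h' hb
    · linear_combination -h
  -- combine
  have hcast : (P.natTrailingDegree : ℂ) = (P.natDegree : ℂ) + 1 := by
    linear_combination (hd2 - hd1) / (-2)
  have : P.natTrailingDegree = P.natDegree + 1 := by exact_mod_cast hcast
  have hle := Polynomial.natTrailingDegree_le_natDegree P
  omega
end

section
/- Let F, G : ℝ × ℝ → ℂ be C² functions such that F, ∂F/∂z, ∂F/∂s, G, ∂G/∂z, ∂G/∂s all tend to 0 as |z| → ∞ (uniformly in s on compacts) and as |s| → ∞ (uniformly in z on compacts), with all relevant integrals absolutely convergent. Suppose F_{zz} − F_{ss} = V(z,s) F + a W(z,s) F and G_{zz} − G_{ss} = V(z,s) G + b W(z,s) G for continuous functions V, W and constants a ≠ b. Then ∫∫_{ℝ²} F(z,s) G(z,s) W(z,s) dz ds = 0. -/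
open Filter MeasureTheory


lemma derivDiff {u : ℝ → ℂ} (hu : ContDiff ℝ 2 u) : Differentiable ℝ (deriv u) := by
  have h2 : ContDiff ℝ ((1:WithTop ℕ∞) + 1) u := by norm_num at hu ⊢; exact hu
  exact ((contDiff_succ_iff_deriv.mp h2).2.2).differentiable one_ne_zero

lemma greenLine (u v : ℝ → ℂ)
    (hu : ContDiff ℝ 2 u) (hv : ContDiff ℝ 2 v)
    (hI : Integrable (fun x => deriv (deriv u) x * v x - u x * deriv (deriv v) x))
    (hut : Tendsto u atTop (nhds 0)) (hub : Tendsto u atBot (nhds 0))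
    (hu't : Tendsto (deriv u) atTop (nhds 0)) (hu'b : Tendsto (deriv u) atBot (nhds 0))
    (hvt : Tendsto v atTop (nhds 0)) (hvb : Tendsto v atBot (nhds 0))
    (hv't : Tendsto (deriv v) atTop (nhds 0)) (hv'b : Tendsto (deriv v) atBot (nhds 0)) :
    ∫ x, (deriv (deriv u) x * v x - u x * deriv (deriv v) x) = 0 := by
  have hud : Differentiable ℝ u := hu.differentiable two_ne_zero
  have hvd : Differentiable ℝ v := hv.differentiable two_ne_zero
  have hu'd := derivDiff hu
  have hv'd := derivDiff hv
  have hd : ∀ x, HasDerivAt (fun y => deriv u y * v y - u y * deriv v y)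
      (deriv (deriv u) x * v x - u x * deriv (deriv v) x) x := by
    intro x
    have h1 := ((hu'd x).hasDerivAt.mul (hvd x).hasDerivAt).sub
      ((hud x).hasDerivAt.mul (hv'd x).hasDerivAt)
    convert h1 using 1
    · rfl
    · rfl
    · ring
  have htop : Tendsto (fun y => deriv u y * v y - u y * deriv v y) atTop (nhds 0) := by
    have := (hu't.mul hvt).sub (hut.mul hv't)
    simpa using this
  have hbot : Tendsto (fun y => deriv u y * v y - u y * deriv v y) atBot (nhds 0) := by
    have := (hu'b.mul hvb).sub (hub.mul hv'b)
    simpa using this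
  simpa using integral_of_hasDerivAt_of_tendsto hd hI hbot htop

/-- A two-variable function decays to 0 as |z| → ∞ uniformly in s on compacts,
and as |s| → ∞ uniformly in z on compacts. -/
def DecaysUnifOnCompacts (H : ℝ × ℝ → ℂ) : Prop :=
  (∀ K : Set ℝ, IsCompact K →
      TendstoUniformlyOn (fun z s => H (z, s)) 0 atTop K ∧
      TendstoUniformlyOn (fun z s => H (z, s)) 0 atBot K) ∧
  (∀ K : Set ℝ, IsCompact K →
      TendstoUniformlyOn (fun s z => H (z, s)) 0 atTop K ∧
      TendstoUniformlyOn (fun s z => H (z, s)) 0 atBot K)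


lemma decays_fst_top {H : ℝ × ℝ → ℂ} (h : DecaysUnifOnCompacts H) (s : ℝ) :
    Tendsto (fun z => H (z, s)) atTop (nhds 0) := by
  simpa using ((h.1 {s} isCompact_singleton).1).tendsto_at (Set.mem_singleton s)

lemma decays_fst_bot {H : ℝ × ℝ → ℂ} (h : DecaysUnifOnCompacts H) (s : ℝ) :
    Tendsto (fun z => H (z, s)) atBot (nhds 0) := by
  simpa using ((h.1 {s} isCompact_singleton).2).tendsto_at (Set.mem_singleton s)

lemma decays_snd_top {H : ℝ × ℝ → ℂ} (h : DecaysUnifOnCompacts H) (z : ℝ) :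
    Tendsto (fun s => H (z, s)) atTop (nhds 0) := by
  simpa using ((h.2 {z} isCompact_singleton).1).tendsto_at (Set.mem_singleton z)

lemma decays_snd_bot {H : ℝ × ℝ → ℂ} (h : DecaysUnifOnCompacts H) (z : ℝ) :
    Tendsto (fun s => H (z, s)) atBot (nhds 0) := by
  simpa using ((h.2 {z} isCompact_singleton).2).tendsto_at (Set.mem_singleton z)

/-- abstract Green's-identity double orthogonality: if
F_zz − F_ss = (V + aW)F and G_zz − G_ss = (V + bW)G with a ≠ b, and F, G and
their first partials decay at infinity with all relevant integrals absolutely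
convergent, then ∬ F G W = 0. -/
theorem stmt19 (F G V W : ℝ × ℝ → ℂ) (a b : ℂ) (hab : a ≠ b)
    (hF : ContDiff ℝ 2 F) (hG : ContDiff ℝ 2 G)
    (hV : Continuous V) (hW : Continuous W)
    (hFpde : ∀ z s : ℝ,
      deriv (fun t => deriv (fun t' => F (t', s)) t) z
        - deriv (fun t => deriv (fun t' => F (z, t')) t) s
      = V (z, s) * F (z, s) + a * W (z, s) * F (z, s))
    (hGpde : ∀ z s : ℝ,
      deriv (fun t => deriv (fun t' => G (t', s)) t) z
        - deriv (fun t => deriv (fun t' => G (z, t')) t) s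
      = V (z, s) * G (z, s) + b * W (z, s) * G (z, s))
    (hFdec : DecaysUnifOnCompacts F)
    (hFzdec : DecaysUnifOnCompacts (fun p => deriv (fun t => F (t, p.2)) p.1))
    (hFsdec : DecaysUnifOnCompacts (fun p => deriv (fun t => F (p.1, t)) p.2))
    (hGdec : DecaysUnifOnCompacts G)
    (hGzdec : DecaysUnifOnCompacts (fun p => deriv (fun t => G (t, p.2)) p.1))
    (hGsdec : DecaysUnifOnCompacts (fun p => deriv (fun t => G (p.1, t)) p.2))
    (hint : Integrable (fun p : ℝ × ℝ => F p * G p * W p))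
    (hint2 : Integrable (fun p : ℝ × ℝ =>
      deriv (fun t => deriv (fun t' => F (t', p.2)) t) p.1 * G p
        - F p * deriv (fun t => deriv (fun t' => G (t', p.2)) t) p.1))
    (hint3 : Integrable (fun p : ℝ × ℝ =>
      deriv (fun t => deriv (fun t' => F (p.1, t')) t) p.2 * G p
        - F p * deriv (fun t => deriv (fun t' => G (p.1, t')) t) p.2)) :
    ∫ p : ℝ × ℝ, F p * G p * W p = 0 := by
  have hvol : (volume : Measure (ℝ × ℝ)) = (volume : Measure ℝ).prod volume :=
    Measure.volume_eq_prod ℝ ℝ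
  have hFz : ∀ s : ℝ, ContDiff ℝ 2 (fun z => F (z, s)) := fun s =>
    hF.comp ((contDiff_id (E := ℝ)).prodMk contDiff_const)
  have hGz : ∀ s : ℝ, ContDiff ℝ 2 (fun z => G (z, s)) := fun s =>
    hG.comp ((contDiff_id (E := ℝ)).prodMk contDiff_const)
  have hFs : ∀ z : ℝ, ContDiff ℝ 2 (fun s => F (z, s)) := fun z =>
    hF.comp (contDiff_const.prodMk (contDiff_id (E := ℝ)))
  have hGs : ∀ z : ℝ, ContDiff ℝ 2 (fun s => G (z, s)) := fun z =>
    hG.comp (contDiff_const.prodMk (contDiff_id (E := ℝ)))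
  have h2 : ∫ p : ℝ × ℝ,
      (deriv (fun t => deriv (fun t' => F (t', p.2)) t) p.1 * G p
        - F p * deriv (fun t => deriv (fun t' => G (t', p.2)) t) p.1) = 0 := by
    have hint2' := hvol ▸ hint2
    rw [hvol, integral_prod_symm _ hint2']
    rw [show (0 : ℂ) = ∫ (_ : ℝ), (0 : ℂ) by simp]
    refine integral_congr_ae ?_
    filter_upwards [hint2'.prod_left_ae] with s hs
    exact greenLine (fun z => F (z, s)) (fun z => G (z, s)) (hFz s) (hGz s) hs
      (decays_fst_top hFdec s) (decays_fst_bot hFdec s)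
      (decays_fst_top hFzdec s) (decays_fst_bot hFzdec s)
      (decays_fst_top hGdec s) (decays_fst_bot hGdec s)
      (decays_fst_top hGzdec s) (decays_fst_bot hGzdec s)
  have h3 : ∫ p : ℝ × ℝ,
      (deriv (fun t => deriv (fun t' => F (p.1, t')) t) p.2 * G p
        - F p * deriv (fun t => deriv (fun t' => G (p.1, t')) t) p.2) = 0 := by
    have hint3' := hvol ▸ hint3
    rw [hvol, integral_prod _ hint3']
    rw [show (0 : ℂ) = ∫ (_ : ℝ), (0 : ℂ) by simp]
    refine integral_congr_ae ?_
    filter_upwards [hint3'.prod_right_ae] with z hz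
    exact greenLine (fun s => F (z, s)) (fun s => G (z, s)) (hFs z) (hGs z) hz
      (decays_snd_top hFdec z) (decays_snd_bot hFdec z)
      (decays_snd_top hFsdec z) (decays_snd_bot hFsdec z)
      (decays_snd_top hGdec z) (decays_snd_bot hGdec z)
      (decays_snd_top hGsdec z) (decays_snd_bot hGsdec z)
  have key : (fun p : ℝ × ℝ =>
      (deriv (fun t => deriv (fun t' => F (t', p.2)) t) p.1 * G p
        - F p * deriv (fun t => deriv (fun t' => G (t', p.2)) t) p.1)
      - (deriv (fun t => deriv (fun t' => F (p.1, t')) t) p.2 * G p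
        - F p * deriv (fun t => deriv (fun t' => G (p.1, t')) t) p.2))
      = fun p : ℝ × ℝ => (a - b) * (F p * G p * W p) := by
    funext p
    obtain ⟨z, s⟩ := p
    have h1 := hFpde z s
    have h2 := hGpde z s
    dsimp only
    linear_combination G (z, s) * h1 - F (z, s) * h2
  have e1 := integral_sub hint2 hint3
  rw [h2, h3, sub_zero] at e1
  rw [key] at e1
  rw [integral_const_mul] at e1
  exact (mul_eq_zero.mp e1).resolve_left (sub_ne_zero.mpr hab)
end
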